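/- If M : Matrix n n ℂ is positive semidefinite and A : Matrix n n ℂ is Hermitian with positive part A₊, then max(0, Re(Tr(M * A))) ≤ Re(Tr(M * A₊)). -/

import Mathlib

open Matrix
open scoped ComplexOrder

/-- The positive part of a matrix, given by the continuous functional calculus
applied to `fun x => max x 0` (for a Hermitian matrix this replaces each
eigenvalue `x` in the spectral decomposition by `max x 0`). -/
noncomputable def matPosPart {n : Type*} [Fintype n] [DecidableEq n]
    (A : Matrix n n ℂ) : Matrix n n ℂ :=
  cfc (fun x : ℝ => max x 0) A

section aux

variable {n : Type*} [Fintype n] [DecidableEq n]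

lemma psd_trace_re_nonneg {N : Matrix n n ℂ} (hN : N.PosSemidef) : 0 ≤ N.trace.re := by
  rw [Matrix.trace]
  have h : ∀ i, 0 ≤ (N i i).re := by
    intro i
    have := hN.re_dotProduct_nonneg (Pi.single i 1)
    simpa [dotProduct, Matrix.mulVec, Pi.single_apply, Finset.sum_ite_eq] using this
  calc (0 : ℝ) = ∑ i : n, 0 := by simp
    _ ≤ ∑ i : n, (N i i).re := Finset.sum_le_sum fun i _ => h i
    _ = (∑ i : n, N.diag i).re := by rw [Complex.re_sum]; rfl

lemma trace_mul_re_nonneg {M B : Matrix n n ℂ} (hM : M.PosSemidef) (hB : B.PosSemidef) :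
    0 ≤ (M * B).trace.re := by
  open scoped MatrixOrder in obtain ⟨C, rfl⟩ := CStarAlgebra.nonneg_iff_eq_star_mul_self.mp hB.nonneg
  rw [← mul_assoc, Matrix.trace_mul_cycle]
  exact psd_trace_re_nonneg (hM.mul_mul_conjTranspose_same C)

lemma matPosPart_posSemidef {A : Matrix n n ℂ} (hA : A.IsHermitian) :
    (matPosPart A).PosSemidef := by
  rw [matPosPart, hA.cfc_eq, Matrix.IsHermitian.cfc]
  have hd : Matrix.PosSemidef (Matrix.diagonal
      ((↑) ∘ (fun x : ℝ => max x 0) ∘ hA.eigenvalues) : Matrix n n ℂ) :=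
    Matrix.PosSemidef.diagonal fun i => by
      simp only [Pi.zero_apply, Function.comp_apply, Complex.zero_le_real]
      exact le_max_right _ _
  simpa [Matrix.star_eq_conjTranspose] using
    hd.mul_mul_conjTranspose_same (hA.eigenvectorUnitary : Matrix n n ℂ)

lemma matPosPart_sub_posSemidef {A : Matrix n n ℂ} (hA : A.IsHermitian) :
    (matPosPart A - A).PosSemidef := by
  have key : matPosPart A - A = (hA.eigenvectorUnitary : Matrix n n ℂ) *
      Matrix.diagonal ((↑) ∘ (fun x : ℝ => max x 0 - x) ∘ hA.eigenvalues) *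
      star (hA.eigenvectorUnitary : Matrix n n ℂ) := by
    calc matPosPart A - A
        = (hA.eigenvectorUnitary : Matrix n n ℂ) *
            Matrix.diagonal ((↑) ∘ (fun x : ℝ => max x 0) ∘ hA.eigenvalues) *
            star (hA.eigenvectorUnitary : Matrix n n ℂ) -
          (hA.eigenvectorUnitary : Matrix n n ℂ) *
            Matrix.diagonal ((↑) ∘ hA.eigenvalues) *
            star (hA.eigenvectorUnitary : Matrix n n ℂ) := by
          rw [matPosPart, hA.cfc_eq, Matrix.IsHermitian.cfc]
          congr 1
          exact hA.spectral_theorem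
      _ = _ := by
          rw [← sub_mul, ← mul_sub, Matrix.diagonal_sub]
          congr 1
          ext i
          simp
  rw [key]
  have hd : Matrix.PosSemidef (Matrix.diagonal
      ((↑) ∘ (fun x : ℝ => max x 0 - x) ∘ hA.eigenvalues) : Matrix n n ℂ) :=
    Matrix.PosSemidef.diagonal fun i => by
      simp only [Pi.zero_apply, Function.comp_apply, Complex.zero_le_real, sub_nonneg]
      exact le_max_left _ _
  simpa [Matrix.star_eq_conjTranspose] using
    hd.mul_mul_conjTranspose_same (hA.eigenvectorUnitary : Matrix n n ℂ)

end aux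

/-- If `M` is positive semidefinite and `A` is Hermitian, then
`max 0 (Re (Tr (M * A))) ≤ Re (Tr (M * A₊))`. -/
theorem max_trace_mul_le_trace_mul_posPart
    {n : Type*} [Fintype n] [DecidableEq n]
    (M A : Matrix n n ℂ) (hM : M.PosSemidef) (hA : A.IsHermitian) :
    max 0 (M * A).trace.re ≤ (M * matPosPart A).trace.re := by
  refine max_le (trace_mul_re_nonneg hM (matPosPart_posSemidef hA)) ?_
  have h := trace_mul_re_nonneg hM (matPosPart_sub_posSemidef hA)
  rw [mul_sub, Matrix.trace_sub, Complex.sub_re, sub_nonneg] at h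
  exact h
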